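/- Suppose T is alternated. Then the constant function h is a best approximation of T in F_k for every k ∈ ℝ; more precisely, ‖T − h(𝔱)‖_∞ ≤ ‖T − f(𝔱)‖_∞ for every f ∈ F̄_k, and the inequality is strict whenever f(t) = a·e^{kt} + b with a ≠ 0 and k ≠ 0 (i.e., whenever f is a non-constant exponential). -/
import Mathlib


/-- If `T` is alternated, the constant function
`h(t) = (max T + min T)/2` is a best approximation of `T` in `F_k` for every
`k ∈ ℝ`, and it is strictly better than any non-constant exponential
`t ↦ a·e^{kt} + b` (i.e. `a ≠ 0`, `k ≠ 0`).  The norm on `Fin n → ℝ` is the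
sup-norm. -/
theorem chebyshev_alternated_constant_is_best {n : ℕ}
    (t : Fin n → ℝ) (ht : StrictMono t) (T : Fin n → ℝ)
    (Tmax Tmin : ℝ)
    (hmax : IsGreatest (Set.range T) Tmax) (hmin : IsLeast (Set.range T) Tmin)
    (halt :
      (∃ M₁ m₁ M₂ : Fin n, M₁ < m₁ ∧ m₁ < M₂ ∧
        T M₁ = Tmax ∧ T M₂ = Tmax ∧ T m₁ = Tmin) ∨
      (∃ m₁ M₁ m₂ : Fin n, m₁ < M₁ ∧ M₁ < m₂ ∧
        T m₁ = Tmin ∧ T m₂ = Tmin ∧ T M₁ = Tmax))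
    (k : ℝ) :
    ∀ a b : ℝ,
      ‖T - (fun _ => (Tmax + Tmin) / 2)‖ ≤
        ‖T - (fun i => a * Real.exp (k * t i) + b)‖ ∧
      (a ≠ 0 → k ≠ 0 →
        ‖T - (fun _ => (Tmax + Tmin) / 2)‖ <
          ‖T - (fun i => a * Real.exp (k * t i) + b)‖) := by
  intro a b
  set E : ℝ := (Tmax - Tmin) / 2 with hEdef
  obtain ⟨iM, hiM⟩ := hmax.1
  obtain ⟨im, him⟩ := hmin.1
  have hbl : ∀ i, Tmin ≤ T i := fun i => hmin.2 ⟨i, rfl⟩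
  have hbu : ∀ i, T i ≤ Tmax := fun i => hmax.2 ⟨i, rfl⟩
  have hmm : Tmin ≤ Tmax := le_trans (hbl iM) (le_of_eq hiM)
  have hEnn : (0:ℝ) ≤ E := by rw [hEdef]; linarith
  -- the norm of T - h equals E
  have hnormh : ‖T - (fun _ => (Tmax + Tmin) / 2)‖ = E := by
    apply le_antisymm
    · rw [pi_norm_le_iff_of_nonneg hEnn]
      intro i
      simp only [Pi.sub_apply, Real.norm_eq_abs, abs_le]
      constructor
      · have := hbl i; rw [hEdef]; linarith
      · have := hbu i; rw [hEdef]; linarith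
    · have h1 := norm_le_pi_norm (T - (fun _ => (Tmax + Tmin) / 2)) iM
      simp only [Pi.sub_apply, Real.norm_eq_abs, hiM] at h1
      have : |Tmax - (Tmax + Tmin) / 2| = E := by
        rw [abs_of_nonneg (by linarith), hEdef]; ring
      linarith [this ▸ h1]
  -- weak bound against any constant function
  have hconst : ∀ c : ℝ, E ≤ ‖T - (fun _ => c)‖ := by
    intro c
    have h1 := norm_le_pi_norm (T - (fun _ => c)) iM
    have h2 := norm_le_pi_norm (T - (fun _ => c)) im
    simp only [Pi.sub_apply, Real.norm_eq_abs, hiM, him] at h1 h2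
    have h3 := le_abs_self (Tmax - c)
    have h4 := neg_abs_le (Tmin - c)
    rw [hEdef]; linarith
  -- strict bound against non-constant exponentials
  have hstrict : a ≠ 0 → k ≠ 0 →
      E < ‖T - (fun i => a * Real.exp (k * t i) + b)‖ := by
    intro ha hk
    by_contra hcon
    push_neg at hcon
    set g : Fin n → ℝ := fun i => a * Real.exp (k * t i) + b with hg
    have hb : ∀ i, |T i - g i| ≤ E := by
      intro i
      have h1 := norm_le_pi_norm (T - g) i
      simp only [Pi.sub_apply, Real.norm_eq_abs] at h1
      linarith
    clear_value g E
    have hdic : (∀ i j : Fin n, i < j → g i < g j) ∨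
        (∀ i j : Fin n, i < j → g j < g i) := by
      rcases ha.lt_or_gt with ha' | ha' <;> rcases hk.lt_or_gt with hk' | hk'
      · -- a < 0, k < 0 : increasing
        left; intro i j hij
        have h1 : Real.exp (k * t j) < Real.exp (k * t i) :=
          Real.exp_lt_exp.mpr (by nlinarith [ht hij])
        simp only [hg]; nlinarith
      · -- a < 0, k > 0 : decreasing
        right; intro i j hij
        have h1 : Real.exp (k * t i) < Real.exp (k * t j) :=
          Real.exp_lt_exp.mpr (by nlinarith [ht hij])
        simp only [hg]; nlinarith
      · -- a > 0, k < 0 : decreasing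
        right; intro i j hij
        have h1 : Real.exp (k * t j) < Real.exp (k * t i) :=
          Real.exp_lt_exp.mpr (by nlinarith [ht hij])
        simp only [hg]; nlinarith
      · -- a > 0, k > 0 : increasing
        left; intro i j hij
        have h1 : Real.exp (k * t i) < Real.exp (k * t j) :=
          Real.exp_lt_exp.mpr (by nlinarith [ht hij])
        simp only [hg]; nlinarith
    rcases halt with ⟨M₁, m₁, M₂, h12, h23, hT1, hT2, hT3⟩ |
        ⟨m₁, M₁, m₂, h12, h23, hT1, hT2, hT3⟩
    · have b1 := abs_le.mp (hb M₁)
      have b2 := abs_le.mp (hb m₁)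
      have b3 := abs_le.mp (hb M₂)
      rw [hT1] at b1; rw [hT3] at b2; rw [hT2] at b3
      rw [hEdef] at b1 b2 b3
      rcases hdic with hmono | hanti
      · have := hmono _ _ h12
        linarith [b1.2, b2.1]
      · have := hanti _ _ h23
        linarith [b3.2, b2.1]
    · have b1 := abs_le.mp (hb m₁)
      have b2 := abs_le.mp (hb M₁)
      have b3 := abs_le.mp (hb m₂)
      rw [hT1] at b1; rw [hT3] at b2; rw [hT2] at b3
      rw [hEdef] at b1 b2 b3
      rcases hdic with hmono | hanti
      · have := hmono _ _ h23
        linarith [b2.2, b3.1]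
      · have := hanti _ _ h12
        linarith [b2.2, b1.1]
  refine ⟨?_, fun ha hk => by rw [hnormh]; exact hstrict ha hk⟩
  rw [hnormh]
  by_cases ha : a = 0
  · subst ha
    simpa only [zero_mul, zero_add] using hconst b
  · by_cases hk : k = 0
    · subst hk
      simpa only [zero_mul, Real.exp_zero, mul_one] using hconst (a + b)
    · exact le_of_lt (hstrict ha hk)
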